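/- arXiv:0710.3825 — 2 statements merged into one kernel-verified Lean document; each statement's English description precedes it below -/
import Mathlib

section
/- For all a, b ∈ V × V, G_y(J_y a, J_y b) = −G_y(a, b). Together with J_y² = −id, this says that (T̃M, g̃₂, J̃) is an almost anti-Hermitian manifold. -/
open scoped InnerProductSpace

/-- The 0-homogeneous lift `g̃₂` of the metric, represented pointwise on `W = V × V` by
`G_y((u₁,w₁),(u₂,w₂)) = (2/‖y‖)(⟨u₁,w₂⟩ + ⟨w₁,u₂⟩)`. -/
noncomputable def Ghom {V : Type*} [NormedAddCommGroup V] [InnerProductSpace ℝ V]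
    (y : V) (a b : V × V) : ℝ :=
  (2 / ‖y‖) * (⟪a.1, b.2⟫_ℝ + ⟪a.2, b.1⟫_ℝ)

/-- The natural almost complex structure `J̃`, represented pointwise on `W = V × V` by
`J_y(u,w) = ((1/‖y‖)w, −‖y‖u)`. -/
noncomputable def Jnat {V : Type*} [NormedAddCommGroup V] [InnerProductSpace ℝ V]
    (y : V) (a : V × V) : V × V :=
  ((1 / ‖y‖) • a.2, -(‖y‖ • a.1))

/-- `G_y(J_y a, J_y b) = −G_y(a, b)` and `J_y² = −id`: the triple `(T̃M, g̃₂, J̃)` is an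
almost anti-Hermitian manifold. -/
theorem almost_anti_hermitian_structure
    (V : Type*) [NormedAddCommGroup V] [InnerProductSpace ℝ V] [FiniteDimensional ℝ V]
    (y : V) (hy : y ≠ 0) :
    (∀ a b : V × V, Ghom y (Jnat y a) (Jnat y b) = - Ghom y a b) ∧
    (∀ a : V × V, Jnat y (Jnat y a) = -a) := by
  have hn : ‖y‖ ≠ 0 := norm_ne_zero_iff.mpr hy
  constructor
  · intro a b
    simp only [Ghom, Jnat, inner_smul_left, inner_smul_right, inner_neg_left,
      inner_neg_right, real_inner_smul_left, real_inner_smul_right, conj_trivial]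
    field_simp
    ring
  · intro a
    simp only [Jnat, smul_neg, smul_smul]
    rw [one_div, inv_mul_cancel₀ hn, mul_inv_cancel₀ hn]
    simp [Prod.ext_iff]
end

section
/- The twin tensor h_Q of the structure (g̃₂, Q̃), defined by h_Q(a, b) = G_y(Q_y a, b), is given explicitly by h_Q((u₁,w₁),(u₂,w₂)) = 2⟨u₁,u₂⟩ + (2/‖y‖²)⟨w₁,w₂⟩, i.e. h_Q = 2 g_{ij} dx^i dx^j + (2 g_{ij}/‖y‖²) δy^i δy^j; it is a positive definite symmetric bilinear form (an inner product) on V × V, and it is 0-homogeneous on the fibers: for every t > 0 and all a, b, h_{Q, ty}(φ_t a, φ_t b) = h_{Q, y}(a, b). -/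
open scoped InnerProductSpace

/-- The natural almost product structure `Q̃`, represented pointwise on `W = V × V` by
`Q_y(u,w) = ((1/‖y‖)w, ‖y‖u)`. -/
noncomputable def Qnat {V : Type*} [NormedAddCommGroup V] [InnerProductSpace ℝ V]
    (y : V) (a : V × V) : V × V :=
  ((1 / ‖y‖) • a.2, ‖y‖ • a.1)

/-- The twin tensor `h_Q` of the structure `(g̃₂, Q̃)`: `h_Q(a, b) = G_y(Q_y a, b)`. -/
noncomputable def twinQ {V : Type*} [NormedAddCommGroup V] [InnerProductSpace ℝ V]
    (y : V) (a b : V × V) : ℝ :=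
  Ghom y (Qnat y a) b

/-- The differential `φ_t` of the homothety `h_t : (x,y) ↦ (x,ty)` in the adapted frame:
`φ_t(u,w) = (u, t•w)`. -/
def homothety {V : Type*} [NormedAddCommGroup V] [InnerProductSpace ℝ V]
    (t : ℝ) (a : V × V) : V × V :=
  (a.1, t • a.2)

/-- The twin tensor `h_Q` of `(g̃₂, Q̃)` is given by
`h_Q((u₁,w₁),(u₂,w₂)) = 2⟨u₁,u₂⟩ + (2/‖y‖²)⟨w₁,w₂⟩`, i.e.
`h_Q = 2 g_{ij} dxⁱ dxʲ + (2 g_{ij}/‖y‖²) δyⁱ δyʲ`; it is a positive definite symmetric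
bilinear form (an inner product) on `V × V`, and it is 0-homogeneous on the fibers:
`h_{Q,ty}(φ_t a, φ_t b) = h_{Q,y}(a, b)` for every `t > 0`. -/
theorem twinQ_formula_inner_product_homogeneous
    (V : Type*) [NormedAddCommGroup V] [InnerProductSpace ℝ V] [FiniteDimensional ℝ V]
    (y : V) (hy : y ≠ 0) :
    (∀ a b : V × V,
      twinQ y a b = 2 * ⟪a.1, b.1⟫_ℝ + (2 / ‖y‖ ^ 2) * ⟪a.2, b.2⟫_ℝ) ∧
    (∀ a b : V × V, twinQ y a b = twinQ y b a) ∧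
    (∀ a : V × V, a ≠ 0 → 0 < twinQ y a a) ∧
    (∀ t : ℝ, 0 < t → ∀ a b : V × V,
      twinQ (t • y) (homothety t a) (homothety t b) = twinQ y a b) := by
  have hny : ‖y‖ ≠ 0 := norm_ne_zero_iff.mpr hy
  have key : ∀ a b : V × V,
      twinQ y a b = 2 * ⟪a.1, b.1⟫_ℝ + (2 / ‖y‖ ^ 2) * ⟪a.2, b.2⟫_ℝ := by
    intro a b
    simp only [twinQ, Ghom, Qnat, real_inner_smul_left]
    field_simp
    ring
  refine ⟨key, ?_, ?_, ?_⟩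
  · intro a b
    rw [key, key, real_inner_comm a.1 b.1, real_inner_comm a.2 b.2]
  · intro a ha
    rw [key, real_inner_self_eq_norm_sq, real_inner_self_eq_norm_sq]
    have hc : (0:ℝ) < 2 / ‖y‖ ^ 2 := by positivity
    have h12 : a.1 ≠ 0 ∨ a.2 ≠ 0 := by
      rcases eq_or_ne a.1 0 with h | h
      · exact Or.inr fun h2 => ha (Prod.ext h h2)
      · exact Or.inl h
    rcases h12 with h | h
    · have h1 : (0:ℝ) < ‖a.1‖ := norm_pos_iff.mpr h
      nlinarith [sq_nonneg ‖a.2‖]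
    · have h2 : (0:ℝ) < ‖a.2‖ := norm_pos_iff.mpr h
      nlinarith [sq_nonneg ‖a.1‖, mul_pos hc (pow_pos h2 2)]
  · intro t ht a b
    have hty : t • y ≠ 0 := smul_ne_zero (ne_of_gt ht) hy
    have keyt : ∀ a b : V × V,
        twinQ (t • y) a b = 2 * ⟪a.1, b.1⟫_ℝ + (2 / ‖t • y‖ ^ 2) * ⟪a.2, b.2⟫_ℝ := by
      intro a b
      have : ‖t • y‖ ≠ 0 := norm_ne_zero_iff.mpr hty
      simp only [twinQ, Ghom, Qnat, real_inner_smul_left]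
      field_simp
      ring
    rw [keyt, key]
    simp only [homothety, norm_smul, Real.norm_eq_abs, abs_of_pos ht,
      real_inner_smul_left, real_inner_smul_right]
    have : t ≠ 0 := ne_of_gt ht
    field_simp
end
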